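/- Let g_i, g_j ∈ SU(2) with h = g_i g_j satisfying h ≠ 1 and h ≠ −1; write the (real) trace of h as tr h = 2 cos θ with θ ∈ (0, π), set F = h − h⁻¹ and t₀ = θ / √(4 − (tr h)²). Then exp(t₀ • F) = h, and consequently conjugation of any matrix by exp(t₀ F) coincides with conjugation by g_i g_j: for every x ∈ M₂(ℂ), exp(t₀F) x exp(t₀F)⁻¹ = (g_ig_j) x (g_ig_j)⁻¹. -/

import Mathlib

open Matrix


/-- Cayley–Hamilton for 2×2 matrices. -/
lemma sq_fin_two' (m : Matrix (Fin 2) (Fin 2) ℂ) :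
    m * m = m.trace • m - m.det • 1 := by
  ext i j
  fin_cases i <;> fin_cases j <;>
    simp [Matrix.mul_apply, Matrix.trace_fin_two, Matrix.det_fin_two, Fin.sum_univ_two,
      Matrix.one_apply, Matrix.smul_apply] <;> ring

/-- exp of a matrix squaring to `-θ² • 1`. -/
lemma exp_of_sq' (A : Matrix (Fin 2) (Fin 2) ℂ) (θ : ℝ) (hθ : θ ≠ 0)
    (h2 : A ^ 2 = (-(θ ^ 2) : ℝ) • 1) :
    NormedSpace.exp A
      = Real.cos θ • (1 : Matrix (Fin 2) (Fin 2) ℂ) + (Real.sin θ / θ) • A := by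
  rw [NormedSpace.exp_eq_tsum (𝕂 := ℝ)]
  refine HasSum.tsum_eq (HasSum.even_add_odd ?_ ?_)
  · have hc := (Real.hasSum_cos θ).smul_const (1 : Matrix (Fin 2) (Fin 2) ℂ)
    convert hc using 2 with n
    · rfl
    rw [pow_mul, h2, smul_pow, one_pow, smul_smul]
    congr 1
    rw [neg_pow, ← pow_mul]
    field_simp
  · have hs := ((Real.hasSum_sin θ).div_const θ).smul_const A
    convert hs using 2 with n
    · rfl
    rw [pow_succ, pow_mul, h2, smul_pow, one_pow, smul_mul_assoc, one_mul, smul_smul]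
    congr 1
    rw [neg_pow, ← pow_mul]
    field_simp
    ring

/-- `SU2` is the special unitary group of 2×2 complex matrices,
identified with the 3-sphere `S³`. -/
abbrev SU2 : Submonoid (Matrix (Fin 2) (Fin 2) ℂ) := Matrix.specialUnitaryGroup (Fin 2) ℂ

noncomputable instance : Group SU2 :=
  { (inferInstance : Monoid SU2) with
    inv := fun A => ⟨star A.1, by
      obtain ⟨hu, hd⟩ := Matrix.mem_specialUnitaryGroup_iff.mp A.2
      refine Matrix.mem_specialUnitaryGroup_iff.mpr ⟨Unitary.star_mem hu, ?_⟩
      rw [Matrix.star_eq_conjTranspose, Matrix.det_conjTranspose, hd, star_one]⟩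
    inv_mul_cancel := fun A => Subtype.ext A.2.1.1 }

/-- At time `t₀ = θ/√(4 − (tr h)²)`, the bending flow's conjugating element
`exp(t₀ F)`, `F = h − h⁻¹`, equals `h = g_i g_j`; hence conjugation by `exp(t₀F)`
coincides with conjugation by `g_i g_j`. -/
theorem exp_time_t0_eq_conj (gi gj : SU2) (h : SU2) (hh : h = gi * gj)
    (h1 : (h : Matrix (Fin 2) (Fin 2) ℂ) ≠ 1)
    (hm1 : (h : Matrix (Fin 2) (Fin 2) ℂ) ≠ -1)
    (θ : ℝ) (hθ : θ ∈ Set.Ioo 0 Real.pi)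
    (htr : ((h : Matrix (Fin 2) (Fin 2) ℂ)).trace = ((2 * Real.cos θ : ℝ) : ℂ))
    (t₀ : ℝ) (ht₀ : t₀ = θ / Real.sqrt (4 - (2 * Real.cos θ) ^ 2))
    (F : Matrix (Fin 2) (Fin 2) ℂ)
    (hF : F = (h : Matrix (Fin 2) (Fin 2) ℂ) - ((h⁻¹ : SU2) : Matrix (Fin 2) (Fin 2) ℂ)) :
    NormedSpace.exp (t₀ • F) = (h : Matrix (Fin 2) (Fin 2) ℂ) ∧
    (∀ x : Matrix (Fin 2) (Fin 2) ℂ,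
      NormedSpace.exp (t₀ • F) * x * (NormedSpace.exp (t₀ • F))⁻¹
        = ((gi * gj : SU2) : Matrix (Fin 2) (Fin 2) ℂ) * x
            * (((gi * gj : SU2) : Matrix (Fin 2) (Fin 2) ℂ))⁻¹) := by
  obtain ⟨hθ0, hθπ⟩ := hθ
  have hθne : θ ≠ 0 := ne_of_gt hθ0
  have hsin : 0 < Real.sin θ := Real.sin_pos_of_pos_of_lt_pi hθ0 hθπ
  have hsne : Real.sin θ ≠ 0 := ne_of_gt hsin
  set t : ℂ := ((2 * Real.cos θ : ℝ) : ℂ) with hts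
  -- basic facts about h
  obtain ⟨hu, hd⟩ := Matrix.mem_specialUnitaryGroup_iff.mp h.2
  have hsq : (h : Matrix (Fin 2) (Fin 2) ℂ) * h = t • (h : Matrix (Fin 2) (Fin 2) ℂ) - 1 := by
    rw [sq_fin_two', htr, hd, one_smul]
  -- star h = t • 1 - h
  have hhstar : (h : Matrix (Fin 2) (Fin 2) ℂ) * star (h : Matrix (Fin 2) (Fin 2) ℂ) = 1 :=
    (Unitary.mem_iff.mp hu).2
  have hstarh : star (h : Matrix (Fin 2) (Fin 2) ℂ) * (h : Matrix (Fin 2) (Fin 2) ℂ) = 1 :=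
    (Unitary.mem_iff.mp hu).1
  have hinv : ((h⁻¹ : SU2) : Matrix (Fin 2) (Fin 2) ℂ) = star (h : Matrix (Fin 2) (Fin 2) ℂ) :=
    rfl
  have hstar_eq : star (h : Matrix (Fin 2) (Fin 2) ℂ)
      = t • (1 : Matrix (Fin 2) (Fin 2) ℂ) - h := by
    have key : (h : Matrix (Fin 2) (Fin 2) ℂ) * (t • 1 - h) = 1 := by
      rw [mul_sub, mul_smul_comm, mul_one, hsq]
      abel
    calc star (h : Matrix (Fin 2) (Fin 2) ℂ)
        = star (h : Matrix (Fin 2) (Fin 2) ℂ) * ((h : Matrix (Fin 2) (Fin 2) ℂ) * (t • 1 - h)) :=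
          by rw [key, mul_one]
      _ = (star (h : Matrix (Fin 2) (Fin 2) ℂ) * h) * (t • 1 - h) := by rw [mul_assoc]
      _ = t • 1 - h := by rw [hstarh, one_mul]
  have hFe : F = (2 : ℂ) • (h : Matrix (Fin 2) (Fin 2) ℂ) - t • 1 := by
    rw [hF, hinv, hstar_eq]
    module
  -- F² = (t² − 4) • 1
  have hF2 : F * F = (t ^ 2 - 4) • (1 : Matrix (Fin 2) (Fin 2) ℂ) := by
    rw [hFe, sub_mul, mul_sub, mul_sub]
    simp only [smul_mul_assoc, mul_smul_comm, one_mul, mul_one, hsq, smul_sub, smul_smul]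
    module
  -- t₀ = θ / (2 sin θ)
  have hsqrt : Real.sqrt (4 - (2 * Real.cos θ) ^ 2) = 2 * Real.sin θ := by
    have : 4 - (2 * Real.cos θ) ^ 2 = (2 * Real.sin θ) ^ 2 := by
      have := Real.sin_sq_add_cos_sq θ
      nlinarith
    rw [this, Real.sqrt_sq (by positivity)]
  have ht₀' : t₀ = θ / (2 * Real.sin θ) := by rw [ht₀, hsqrt]
  have hrs : ∀ (r : ℝ) (M : Matrix (Fin 2) (Fin 2) ℂ), r • M = (r : ℂ) • M := by
    intro r M
    ext i j
    simp [Matrix.smul_apply, Complex.real_smul]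
  -- (t₀ • F)² = -θ² • 1
  have hA2 : (t₀ • F) ^ 2 = (-(θ ^ 2) : ℝ) • (1 : Matrix (Fin 2) (Fin 2) ℂ) := by
    rw [sq, smul_mul_smul_comm, hF2, hrs, hrs, smul_smul]
    congr 1
    rw [hts]
    have hcs := Real.sin_sq_add_cos_sq θ
    have : (t₀ * t₀) * ((2 * Real.cos θ) ^ 2 - 4) = -(θ ^ 2) := by
      rw [ht₀']
      field_simp
      nlinarith
    push_cast [← this]
    ring
  -- exp(t₀ F) = h
  have hexp : NormedSpace.exp (t₀ • F) = (h : Matrix (Fin 2) (Fin 2) ℂ) := by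
    rw [exp_of_sq' _ θ hθne hA2, smul_smul]
    have hcoef : Real.sin θ / θ * t₀ = 1 / 2 := by
      rw [ht₀']; field_simp
    rw [hcoef, hFe, hrs, hrs, hts]
    push_cast
    module
  exact ⟨hexp, fun x => by rw [hexp, hh]⟩
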